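/- arXiv:2501.12277 — 2 statements merged into one kernel-verified Lean document; each statement's English description precedes it below -/
import Mathlib

section
/- Let g : [0, δ) → ℝ be C² with g(0) = v₀ ≥ 0, g'(0) = 0, g'' = 2 cosh(2g) on [0, δ), and suppose g(x) → +∞ as x → δ⁻. Then ∫₀^δ e^{g(x)} dx = +∞. -/
open MeasureTheory

theorem stmt_7 (δ v₀ : ℝ) (g g' : ℝ → ℝ) (hv₀ : 0 ≤ v₀) (hδ : 0 < δ)
    (hg : ∀ x ∈ Set.Ico (0:ℝ) δ, HasDerivWithinAt g (g' x) (Set.Ico 0 δ) x)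
    (hg' : ∀ x ∈ Set.Ico (0:ℝ) δ,
      HasDerivWithinAt g' (2 * Real.cosh (2 * g x)) (Set.Ico 0 δ) x)
    (h0 : g 0 = v₀) (h0' : g' 0 = 0)
    (hblow : Filter.Tendsto g (nhdsWithin δ (Set.Iio δ)) Filter.atTop) :
    ∫⁻ x in Set.Ioo (0:ℝ) δ, ENNReal.ofReal (Real.exp (g x)) ∂volume = ⊤ := by
  have hS0 : (0:ℝ) ∈ Set.Ico (0:ℝ) δ := ⟨le_refl 0, hδ⟩
  have hgc : ContinuousOn g (Set.Ico 0 δ) := fun x hx => (hg x hx).continuousWithinAt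
  have hg'c : ContinuousOn g' (Set.Ico 0 δ) := fun x hx => (hg' x hx).continuousWithinAt
  have hint : interior (Set.Ico (0:ℝ) δ) = Set.Ioo 0 δ := interior_Ico
  -- derivatives at interior points
  have hgd : ∀ x ∈ Set.Ioo (0:ℝ) δ, HasDerivAt g (g' x) x := fun x hx =>
    (hg x ⟨le_of_lt hx.1, hx.2⟩).hasDerivAt (Ico_mem_nhds hx.1 hx.2)
  have hg'd : ∀ x ∈ Set.Ioo (0:ℝ) δ, HasDerivAt g' (2 * Real.cosh (2 * g x)) x := fun x hx =>
    (hg' x ⟨le_of_lt hx.1, hx.2⟩).hasDerivAt (Ico_mem_nhds hx.1 hx.2)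
  -- g' is nonnegative
  have hg'mono : MonotoneOn g' (Set.Ico 0 δ) := by
    apply monotoneOn_of_hasDerivWithinAt_nonneg (convex_Ico 0 δ) hg'c
    · intro x hx
      rw [hint] at hx ⊢
      exact (hg'd x hx).hasDerivWithinAt
    · intro x _
      positivity
  have hg'nn : ∀ x ∈ Set.Ico (0:ℝ) δ, 0 ≤ g' x := fun x hx => by
    have := hg'mono hS0 hx hx.1
    rwa [h0'] at this
  -- energy E is antitone (its derivative is 0)
  set E : ℝ → ℝ := fun x => (g' x) ^ 2 - 2 * Real.sinh (2 * g x) with hE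
  have hEd : ∀ x ∈ Set.Ioo (0:ℝ) δ, HasDerivAt E 0 x := by
    intro x hx
    have h1 : HasDerivAt (fun y => (g' y) ^ 2) (2 * g' x * (2 * Real.cosh (2 * g x))) x := by
      have := (hg'd x hx).fun_pow 2
      simpa [mul_comm, mul_assoc, mul_left_comm] using this
    have h2 : HasDerivAt (fun y => 2 * Real.sinh (2 * g y))
        (2 * (Real.cosh (2 * g x) * (2 * g' x))) x := by
      have hin : HasDerivAt (fun y => 2 * g y) (2 * g' x) x := (hgd x hx).const_mul 2
      exact ((Real.hasDerivAt_sinh (2 * g x)).comp x hin).const_mul 2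
    have : HasDerivAt E (2 * g' x * (2 * Real.cosh (2 * g x)) - 2 * (Real.cosh (2 * g x) * (2 * g' x))) x :=
      h1.fun_sub h2
    convert this using 1
    ring
  have hEanti : AntitoneOn E (Set.Ico 0 δ) := by
    apply antitoneOn_of_hasDerivWithinAt_nonpos (convex_Ico 0 δ)
      (f' := fun _ => (0:ℝ))
    · exact (hg'c.pow 2).sub (continuousOn_const.mul
        (Real.continuous_sinh.comp_continuousOn (continuousOn_const.mul hgc)))
    · intro x hx
      rw [hint] at hx ⊢
      exact (hEd x hx).hasDerivWithinAt
    · intro x _; exact le_refl 0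
  -- pointwise bound g' x ≤ exp (g x)
  have hkey : ∀ x ∈ Set.Ico (0:ℝ) δ, g' x ≤ Real.exp (g x) := by
    intro x hx
    have hEle : E x ≤ E 0 := hEanti hS0 hx hx.1
    have hE0 : E 0 = -(2 * Real.sinh (2 * v₀)) := by simp [hE, h0, h0']
    have hsnn : 0 ≤ Real.sinh (2 * v₀) := by
      rw [Real.sinh_eq]
      have := Real.exp_le_exp.mpr (show -(2*v₀) ≤ 2*v₀ by linarith)
      linarith
    have hsq : (g' x) ^ 2 ≤ 2 * Real.sinh (2 * g x) := by
      rw [hE0] at hEle; simp only [hE] at hEle; linarith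
    have hsinh : 2 * Real.sinh (2 * g x) ≤ Real.exp (g x) ^ 2 := by
      rw [Real.sinh_eq]
      have h1 : 0 < Real.exp (-(2 * g x)) := Real.exp_pos _
      have h2 : Real.exp (2 * g x) = Real.exp (g x) ^ 2 := by
        rw [← Real.exp_nat_mul]; norm_num [mul_comm]
      linarith
    nlinarith [hg'nn x hx, Real.exp_pos (g x)]
  -- for every y in Ioo 0 δ, the integral dominates g y - v₀
  have hmain : ∀ y ∈ Set.Ioo (0:ℝ) δ, ENNReal.ofReal (g y - v₀)
      ≤ ∫⁻ x in Set.Ioo (0:ℝ) δ, ENNReal.ofReal (Real.exp (g x)) ∂volume := by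
    intro y hy
    have hy0 : (0:ℝ) ≤ y := le_of_lt hy.1
    have hsub : Set.Icc (0:ℝ) y ⊆ Set.Ico 0 δ := fun z hz => ⟨hz.1, lt_of_le_of_lt hz.2 hy.2⟩
    have hgcy : ContinuousOn g (Set.Icc 0 y) := hgc.mono hsub
    have hg'cy : ContinuousOn g' (Set.Icc 0 y) := hg'c.mono hsub
    have hecy : ContinuousOn (fun x => Real.exp (g x)) (Set.Icc 0 y) :=
      Real.continuous_exp.comp_continuousOn hgcy
    have hg'int : IntervalIntegrable g' volume 0 y :=
      hg'cy.intervalIntegrable_of_Icc hy0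
    have heint : IntervalIntegrable (fun x => Real.exp (g x)) volume 0 y :=
      hecy.intervalIntegrable_of_Icc hy0
    have hFTC : ∫ x in (0:ℝ)..y, g' x = g y - g 0 := by
      apply intervalIntegral.integral_eq_sub_of_hasDeriv_right_of_le hy0 hgcy _ hg'int
      intro x hx
      exact (hgd x ⟨hx.1, lt_trans hx.2 hy.2⟩).hasDerivWithinAt
    have hmono : ∫ x in (0:ℝ)..y, g' x ≤ ∫ x in (0:ℝ)..y, Real.exp (g x) := by
      apply intervalIntegral.integral_mono_on hy0 hg'int heint
      intro x hx
      exact hkey x (hsub hx)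
    have hbound : g y - v₀ ≤ ∫ x in Set.Ioo (0:ℝ) y, Real.exp (g x) := by
      have : ∫ x in (0:ℝ)..y, Real.exp (g x) = ∫ x in Set.Ioo (0:ℝ) y, Real.exp (g x) := by
        rw [intervalIntegral.integral_of_le hy0, MeasureTheory.integral_Ioc_eq_integral_Ioo]
      rw [← this]
      calc g y - v₀ = ∫ x in (0:ℝ)..y, g' x := by rw [hFTC, h0]
        _ ≤ _ := hmono
    have hIoo : IntegrableOn (fun x => Real.exp (g x)) (Set.Ioo 0 y) volume :=
      (hecy.integrableOn_Icc).mono_set Set.Ioo_subset_Icc_self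
    calc ENNReal.ofReal (g y - v₀)
        ≤ ENNReal.ofReal (∫ x in Set.Ioo (0:ℝ) y, Real.exp (g x)) :=
          ENNReal.ofReal_le_ofReal hbound
      _ = ∫⁻ x in Set.Ioo (0:ℝ) y, ENNReal.ofReal (Real.exp (g x)) ∂volume := by
          exact MeasureTheory.ofReal_integral_eq_lintegral_ofReal hIoo
            (Filter.Eventually.of_forall fun x => (Real.exp_pos _).le)
      _ ≤ _ := lintegral_mono_set (Set.Ioo_subset_Ioo_right (le_of_lt hy.2))
  -- conclude
  by_contra hne
  set I := ∫⁻ x in Set.Ioo (0:ℝ) δ, ENNReal.ofReal (Real.exp (g x)) ∂volume with hI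
  have hIlt : I ≠ ⊤ := hne
  set M := I.toReal with hM
  have hMnn : 0 ≤ M := ENNReal.toReal_nonneg
  have hIM : I = ENNReal.ofReal M := by rw [hM, ENNReal.ofReal_toReal hIlt]
  have hself : (Set.Ioo (0:ℝ) δ) ∈ nhdsWithin δ (Set.Iio δ) := by
    have h1 : Set.Ioi (0:ℝ) ∈ nhdsWithin δ (Set.Iio δ) :=
      mem_nhdsWithin_of_mem_nhds (Ioi_mem_nhds hδ)
    have h2 : Set.Iio δ ∈ nhdsWithin δ (Set.Iio δ) := self_mem_nhdsWithin
    have h3 := Filter.inter_mem h1 h2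
    simpa [Set.Ioi_inter_Iio] using h3
  have : ∀ᶠ y in nhdsWithin δ (Set.Iio δ), v₀ + M + 1 ≤ g y :=
    hblow.eventually (Filter.eventually_ge_atTop _)
  have hne' : (nhdsWithin δ (Set.Iio δ)).NeBot := nhdsLT_neBot δ
  obtain ⟨y, hy1, hy2⟩ := (this.and hself).exists
  have h1 : ENNReal.ofReal (g y - v₀) ≤ ENNReal.ofReal M := by
    rw [← hIM]; exact hmain y hy2
  have h2 : g y - v₀ ≤ M := by
    have := (ENNReal.ofReal_le_ofReal_iff hMnn).mp h1
    exact this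
  linarith
end

section
/- Let g : [0, δ) → ℝ be a maximal C² solution of g'' = 2 cosh(2g) with g(0) = v₀ ≥ 0, g'(0) = 0, where δ < ∞ is the maximal existence time. Then g(x) → +∞ as x → δ⁻. -/
open Set Filter Real Topology

theorem stmt_8 (δ v₀ : ℝ) (g g' : ℝ → ℝ) (hv₀ : 0 ≤ v₀) (hδ : 0 < δ)
    (hg : ∀ x ∈ Set.Ico (0:ℝ) δ, HasDerivWithinAt g (g' x) (Set.Ico 0 δ) x)
    (hg' : ∀ x ∈ Set.Ico (0:ℝ) δ,
      HasDerivWithinAt g' (2 * Real.cosh (2 * g x)) (Set.Ico 0 δ) x)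
    (h0 : g 0 = v₀) (h0' : g' 0 = 0)
    (hmax : ∀ δ' > δ, ¬ ∃ h h' : ℝ → ℝ,
      (∀ x ∈ Set.Ico (0:ℝ) δ', HasDerivWithinAt h (h' x) (Set.Ico 0 δ') x ∧
        HasDerivWithinAt h' (2 * Real.cosh (2 * h x)) (Set.Ico 0 δ') x) ∧
      (∀ x ∈ Set.Ico (0:ℝ) δ, h x = g x)) :
    Filter.Tendsto g (nhdsWithin δ (Set.Iio δ)) Filter.atTop := by
  -- basic regularity
  have hgc : ContinuousOn g (Ico 0 δ) := fun x hx => (hg x hx).continuousWithinAt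
  have hg'c : ContinuousOn g' (Ico 0 δ) := fun x hx => (hg' x hx).continuousWithinAt
  have hgA : ∀ x ∈ Set.Ioo (0:ℝ) δ, HasDerivAt g (g' x) x := fun x hx =>
    (hg x ⟨hx.1.le, hx.2⟩).hasDerivAt (Ico_mem_nhds hx.1 hx.2)
  have hg'A : ∀ x ∈ Set.Ioo (0:ℝ) δ, HasDerivAt g' (2 * Real.cosh (2 * g x)) x := fun x hx =>
    (hg' x ⟨hx.1.le, hx.2⟩).hasDerivAt (Ico_mem_nhds hx.1 hx.2)
  -- g' is nonnegative, g is monotone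
  have hmono' : MonotoneOn g' (Ico 0 δ) := by
    apply monotoneOn_of_deriv_nonneg (convex_Ico 0 δ) hg'c
    · intro x hx
      rw [interior_Ico] at hx
      exact ((hg'A x hx).differentiableAt.differentiableWithinAt)
    · intro x hx
      rw [interior_Ico] at hx
      rw [(hg'A x hx).deriv]
      positivity
  have hg'nonneg : ∀ x ∈ Ico (0:ℝ) δ, 0 ≤ g' x := fun x hx => by
    have := hmono' (left_mem_Ico.2 hδ) hx hx.1
    rwa [h0'] at this
  have hmono : MonotoneOn g (Ico 0 δ) := by
    apply monotoneOn_of_deriv_nonneg (convex_Ico 0 δ) hgc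
    · intro x hx
      rw [interior_Ico] at hx
      exact ((hgA x hx).differentiableAt.differentiableWithinAt)
    · intro x hx
      rw [interior_Ico] at hx
      rw [(hgA x hx).deriv]
      exact hg'nonneg x ⟨hx.1.le, hx.2⟩
  -- the energy identity (first integral)
  have energy : ∀ x ∈ Ico (0:ℝ) δ,
      g' x ^ 2 = 2 * Real.sinh (2 * g x) - 2 * Real.sinh (2 * v₀) := by
    set E : ℝ → ℝ := fun x => g' x ^ 2 - 2 * Real.sinh (2 * g x) with hE
    have hEd : ∀ x ∈ Ico (0:ℝ) δ, HasDerivWithinAt E 0 (Ico 0 δ) x := by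
      intro x hx
      have h1 : HasDerivWithinAt (fun y => g' y ^ 2)
          (2 * g' x ^ 1 * (2 * Real.cosh (2 * g x))) (Ico 0 δ) x := by
        simpa using (hg' x hx).fun_pow 2
      have h2 : HasDerivWithinAt (fun y => Real.sinh (2 * g y))
          (Real.cosh (2 * g x) * (2 * g' x)) (Ico 0 δ) x :=
        by have := (Real.hasDerivAt_sinh (2 * g x)).comp_hasDerivWithinAt x ((hg x hx).const_mul 2); exact this
      have := h1.fun_sub (h2.const_mul 2)
      refine this.congr_deriv ?_
      ring
    intro x hx
    have hEc : ContinuousOn E (Ico 0 δ) := by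
      apply ContinuousOn.sub (hg'c.pow 2)
      exact continuousOn_const.mul
        (Real.continuous_sinh.comp_continuousOn (continuousOn_const.mul hgc))
    have key : E x = E 0 := by
      apply constant_of_has_deriv_right_zero (f := E) (a := 0) (b := x)
        (hEc.mono (Icc_subset_Ico_right hx.2))
      · intro y hy
        have hys : y ∈ Ico (0:ℝ) δ := ⟨hy.1, hy.2.trans hx.2⟩
        refine (hEd y hys).mono_of_mem_nhdsWithin ?_
        rw [mem_nhdsWithin]
        exact ⟨Iio δ, isOpen_Iio, hys.2, fun z hz => ⟨le_trans hy.1 hz.2, hz.1⟩⟩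
      · exact ⟨hx.1, le_refl x⟩
    simp only [hE, h0, h0'] at key
    nlinarith [key]
  -- main case split
  by_cases HB : BddAbove (g '' Ico 0 δ)
  · exfalso
    -- limit of g at δ⁻
    set G : ℝ → ℝ := fun x => g (max x 0) with hG
    have hGmono : MonotoneOn G (Iio δ) := by
      intro a ha b hb hab
      exact hmono ⟨le_max_right _ _, max_lt ha hδ⟩ ⟨le_max_right _ _, max_lt hb hδ⟩
        (max_le_max hab (le_refl 0))
    have hGbdd : BddAbove (G '' Iio δ) := by
      apply HB.mono
      rintro _ ⟨x, hx, rfl⟩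
      exact ⟨max x 0, ⟨le_max_right _ _, max_lt hx hδ⟩, rfl⟩
    set L : ℝ := sSup (G '' Iio δ) with hL
    have hGL : Tendsto G (𝓝[<] δ) (𝓝 L) := hGmono.tendsto_nhdsLT hGbdd
    have hEqG : ∀ᶠ x in 𝓝[<] δ, G x = g x := by
      filter_upwards [Ioo_mem_nhdsLT_of_mem (show δ ∈ Ioc (0:ℝ) δ from ⟨hδ, le_refl δ⟩)]
        with x hx
      simp [hG, max_eq_left hx.1.le]
    have hgL : Tendsto g (𝓝[<] δ) (𝓝 L) := hGL.congr' hEqG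
    -- limit of g' at δ⁻
    set L' : ℝ := Real.sqrt (2 * Real.sinh (2 * L) - 2 * Real.sinh (2 * v₀)) with hL'
    have hsqrt : ∀ x ∈ Ico (0:ℝ) δ,
        g' x = Real.sqrt (2 * Real.sinh (2 * g x) - 2 * Real.sinh (2 * v₀)) := by
      intro x hx
      rw [← energy x hx, Real.sqrt_sq (hg'nonneg x hx)]
    have hg'L : Tendsto g' (𝓝[<] δ) (𝓝 L') := by
      have hcont : Continuous fun u =>
          Real.sqrt (2 * Real.sinh (2 * u) - 2 * Real.sinh (2 * v₀)) := by
        exact Real.continuous_sqrt.comp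
          ((continuous_const.mul
            (Real.continuous_sinh.comp (continuous_const.mul continuous_id))).sub
            continuous_const)
      refine Tendsto.congr' ?_ ((hcont.tendsto L).comp hgL)
      filter_upwards [Ioo_mem_nhdsLT_of_mem (show δ ∈ Ioc (0:ℝ) δ from ⟨hδ, le_refl δ⟩)]
        with x hx
      exact (hsqrt x ⟨hx.1.le, hx.2⟩).symm
    -- local solution past δ by Picard–Lindelöf
    have hvC : ContDiff ℝ 1 (fun p : ℝ × ℝ => (p.2, 2 * Real.cosh (2 * p.1))) :=
      ContDiff.prodMk contDiff_snd
        (contDiff_const.mul (contDiff_const.mul contDiff_fst).cosh)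
    obtain ⟨β, hβ0, ε, hε, hβ⟩ :=
      (hvC.contDiffAt (x := (L, L'))).exists_forall_mem_closedBall_exists_eq_forall_mem_Ioo_hasDerivAt₀ δ
    -- glue the extension
    set δ' : ℝ := δ + ε / 2 with hδ'
    have hδ'δ : δ < δ' := by simp [hδ']; linarith
    set h : ℝ → ℝ := fun x => if x < δ then g x else (β x).1 with hh
    set h' : ℝ → ℝ := fun x => if x < δ then g' x else (β x).2 with hh'
    have hβ1 : ∀ x ∈ Ioo (δ - ε) (δ + ε), HasDerivAt (fun t => (β t).1) ((β x).2) x := by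
      intro x hx
      exact ((ContinuousLinearMap.fst ℝ ℝ ℝ).hasFDerivAt.comp_hasDerivAt x (hβ x hx))
    have hβ2 : ∀ x ∈ Ioo (δ - ε) (δ + ε),
        HasDerivAt (fun t => (β t).2) (2 * Real.cosh (2 * (β x).1)) x := by
      intro x hx
      exact ((ContinuousLinearMap.snd ℝ ℝ ℝ).hasFDerivAt.comp_hasDerivAt x (hβ x hx))
    have hmemβ : ∀ x ∈ Ico (0:ℝ) δ', ¬ x < δ → x ∈ Ioo (δ - ε) (δ + ε) := by
      intro x hx hxd
      have h2 : x < δ + ε / 2 := hδ' ▸ hx.2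
      have h1 := not_lt.1 hxd
      constructor <;> linarith
    have hEg : ∀ y ∈ Iio δ, h y = g y := fun y hy => if_pos hy
    have hEg' : ∀ y ∈ Iio δ, h' y = g' y := fun y hy => if_pos hy
    have hEβ1 : ∀ y ∈ Ici δ, h y = (β y).1 := fun y hy => if_neg (not_lt.2 hy)
    have hEβ2 : ∀ y ∈ Ici δ, h' y = (β y).2 := fun y hy => if_neg (not_lt.2 hy)
    have hhδ : h δ = L := by rw [hEβ1 δ (le_refl δ), hβ0]
    have hh'δ : h' δ = L' := by rw [hEβ2 δ (le_refl δ), hβ0]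
    have hhA : ∀ y ∈ Ioo (0:ℝ) δ, HasDerivAt h (g' y) y := by
      intro y hy
      refine (hgA y hy).congr_of_eventuallyEq ?_
      filter_upwards [Iio_mem_nhds hy.2] with z hz using hEg z hz
    have hh'A : ∀ y ∈ Ioo (0:ℝ) δ, HasDerivAt h' (2 * Real.cosh (2 * g y)) y := by
      intro y hy
      refine (hg'A y hy).congr_of_eventuallyEq ?_
      filter_upwards [Iio_mem_nhds hy.2] with z hz using hEg' z hz
    have hIoo : Ioo (0:ℝ) δ ∈ 𝓝[<] δ := Ioo_mem_nhdsLT_of_mem ⟨hδ, le_refl δ⟩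
    have hleft : HasDerivWithinAt h L' (Iic δ) δ := by
      apply hasDerivWithinAt_Iic_of_tendsto_deriv (s := Ioo 0 δ)
      · exact fun y hy => ((hhA y hy).differentiableAt).differentiableWithinAt
      · rw [ContinuousWithinAt, hhδ]
        refine Tendsto.congr' ?_ (hgL.mono_left (nhdsWithin_mono δ Ioo_subset_Iio_self))
        filter_upwards [self_mem_nhdsWithin] with z hz using (hEg z (Ioo_subset_Iio_self hz)).symm
      · exact hIoo
      · refine Tendsto.congr' ?_ hg'L
        filter_upwards [hIoo] with z hz using ((hhA z hz).deriv).symm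
    have hleft' : HasDerivWithinAt h' (2 * Real.cosh (2 * L)) (Iic δ) δ := by
      apply hasDerivWithinAt_Iic_of_tendsto_deriv (s := Ioo 0 δ)
      · exact fun y hy => ((hh'A y hy).differentiableAt).differentiableWithinAt
      · rw [ContinuousWithinAt, hh'δ]
        refine Tendsto.congr' ?_ (hg'L.mono_left (nhdsWithin_mono δ Ioo_subset_Iio_self))
        filter_upwards [self_mem_nhdsWithin] with z hz using (hEg' z (Ioo_subset_Iio_self hz)).symm
      · exact hIoo
      · have hcont : Continuous fun u : ℝ => 2 * Real.cosh (2 * u) :=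
          continuous_const.mul (Real.continuous_cosh.comp (continuous_const.mul continuous_id))
        refine Tendsto.congr' ?_ ((hcont.tendsto L).comp hgL)
        filter_upwards [hIoo] with z hz using ((hh'A z hz).deriv).symm
    have hδmem : δ ∈ Ioo (δ - ε) (δ + ε) := by constructor <;> linarith
    have hright : HasDerivWithinAt h L' (Ici δ) δ := by
      refine ((hβ1 δ hδmem).hasDerivWithinAt.congr hEβ1 (hEβ1 δ (le_refl δ))).congr_deriv ?_
      rw [hβ0]
    have hright' : HasDerivWithinAt h' (2 * Real.cosh (2 * L)) (Ici δ) δ := by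
      refine ((hβ2 δ hδmem).hasDerivWithinAt.congr hEβ2 (hEβ2 δ (le_refl δ))).congr_deriv ?_
      rw [hβ0]
    apply hmax δ' hδ'δ
    refine ⟨h, h', fun x hx => ?_, fun x hx => hEg x hx.2⟩
    rcases lt_trichotomy x δ with hxδ | rfl | hxδ
    · have hmem : Ico (0:ℝ) δ ∈ 𝓝[Ico 0 δ'] x :=
        mem_nhdsWithin.2 ⟨Iio δ, isOpen_Iio, hxδ, fun z hz => ⟨hz.2.1, hz.1⟩⟩
      have hIio : Iio δ ∈ 𝓝[Ico 0 δ'] x := mem_nhdsWithin_of_mem_nhds (Iio_mem_nhds hxδ)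
      have hev : h =ᶠ[𝓝[Ico 0 δ'] x] g := eventuallyEq_of_mem hIio hEg
      have hev' : h' =ᶠ[𝓝[Ico 0 δ'] x] g' := eventuallyEq_of_mem hIio hEg'
      constructor
      · have := ((hg x ⟨hx.1, hxδ⟩).mono_of_mem_nhdsWithin hmem).congr_of_eventuallyEq
          hev (hEg x hxδ)
        rw [hEg' x hxδ]
        exact this
      · have := ((hg' x ⟨hx.1, hxδ⟩).mono_of_mem_nhdsWithin hmem).congr_of_eventuallyEq
          hev' (hEg' x hxδ)
        rw [hEg x hxδ]
        exact this
    · constructor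
      · rw [hh'δ]
        exact (hleft.union hright).mono (by rw [Iic_union_Ici]; exact subset_univ _)
      · rw [hhδ]
        exact (hleft'.union hright').mono (by rw [Iic_union_Ici]; exact subset_univ _)
    · have hxm : x ∈ Ioo (δ - ε) (δ + ε) := hmemβ x hx (not_lt.2 hxδ.le)
      have hIci : Ici δ ∈ 𝓝[Ico 0 δ'] x := mem_nhdsWithin_of_mem_nhds
        (mem_of_superset (Ioi_mem_nhds hxδ) Ioi_subset_Ici_self)
      have hev : h =ᶠ[𝓝[Ico 0 δ'] x] fun t => (β t).1 := eventuallyEq_of_mem hIci hEβ1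
      have hev' : h' =ᶠ[𝓝[Ico 0 δ'] x] fun t => (β t).2 := eventuallyEq_of_mem hIci hEβ2
      constructor
      · have := ((hβ1 x hxm).hasDerivWithinAt (s := Ico 0 δ')).congr_of_eventuallyEq
          hev (hEβ1 x hxδ.le)
        rw [hEβ2 x hxδ.le]
        exact this
      · have := ((hβ2 x hxm).hasDerivWithinAt (s := Ico 0 δ')).congr_of_eventuallyEq
          hev' (hEβ2 x hxδ.le)
        rw [hEβ1 x hxδ.le]
        exact this
  · -- unbounded case: the conclusion
    rw [not_bddAbove_iff] at HB
    rw [tendsto_atTop]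
    intro M
    obtain ⟨y, ⟨x, hxs, rfl⟩, hMy⟩ := HB M
    filter_upwards [Ioo_mem_nhdsLT_of_mem (show δ ∈ Ioc x δ from ⟨hxs.2, le_refl δ⟩)] with z hz
    exact hMy.le.trans (hmono hxs ⟨hxs.1.trans hz.1.le, hz.2⟩ hz.1.le)
end
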